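/- Let A be a skew PBW extension of a ring R with respect to x₁,…,xₙ, with parameters σᵢ, δᵢ, c_{ij}, d_{ij}, a_{ij}^{(k)}. Let B be a ring such that: (i) there exists a ring homomorphism φ : R → B; (ii) there exist elements y₁,…,yₙ ∈ B such that B is a free left R-module (scalar action r·b := φ(r)b) with basis the standard monomials y₁^{α₁}⋯yₙ^{αₙ}, α ∈ ℕⁿ; (iii) yᵢ φ(r) = φ(σᵢ(r)) yᵢ + φ(δᵢ(r)) for every r ∈ R, and y_j yᵢ = φ(c_{ij}) yᵢ y_j + φ(a_{ij}^{(1)}) y₁ + ⋯ + φ(a_{ij}^{(n)}) yₙ + φ(d_{ij}) for all i < j. Then B ≅ A as rings, via the homomorphism sending r₁x^{α₁}+⋯+r_t x^{α_t} to φ(r₁)y^{α₁}+⋯+φ(r_t)y^{α_t}. -/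

import Mathlib

/-! ## Skew PBW extensions -/

/-- The standard monomial `x₁^{α₁} ⋯ xₙ^{αₙ}`, the factors taken in increasing index order. -/
def xmon {A : Type} [Ring A] {n : ℕ} (x : Fin n → A) (α : Fin n → ℕ) : A :=
  ((List.finRange n).map (fun i => x i ^ α i)).prod

/-! auxiliary lemmas -/


lemma xmon_zero {A : Type} [Ring A] {n : ℕ} (x : Fin n → A) : xmon x 0 = 1 := by
  unfold xmon
  apply List.prod_eq_one
  intro a ha
  simp at ha
  obtain ⟨i, rfl⟩ := ha
  simp

lemma mem_drop_finRange {n k : ℕ} {l : Fin n} (h : l ∈ (List.finRange n).drop k) : k ≤ l.val := by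
  obtain ⟨j, hj, rfl⟩ := List.mem_iff_getElem.1 h
  simp [List.getElem_drop, List.getElem_finRange]

lemma drop_finRange_cons {n k : ℕ} (hk : k < n) :
    (List.finRange n).drop k = ⟨k, hk⟩ :: (List.finRange n).drop (k+1) := by
  have := List.drop_eq_getElem_cons (l := List.finRange n) (by simpa using hk)
  simpa using this

lemma xmon_eq_drop {A : Type} [Ring A] {n : ℕ} (x : Fin n → A) (α : Fin n → ℕ) (k : ℕ)
    (h : ∀ l : Fin n, l.val < k → α l = 0) :
    xmon x α = (((List.finRange n).drop k).map (fun l => x l ^ α l)).prod := by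
  induction k with
  | zero => simp [xmon]
  | succ k ih =>
    rw [ih (fun l hl => h l (by omega))]
    by_cases hk : k < n
    · rw [drop_finRange_cons hk]
      have h0 : α ⟨k, hk⟩ = 0 := h ⟨k, hk⟩ (by simp)
      simp [h0]
    · rw [List.drop_eq_nil_of_le (by simpa using le_of_not_gt hk),
        List.drop_eq_nil_of_le (by simp; omega)]

lemma xmon_mul_left {A : Type} [Ring A] {n : ℕ} (x : Fin n → A) (α : Fin n → ℕ) (i : Fin n)
    (h : ∀ l, l < i → α l = 0) :
    x i * xmon x α = xmon x (α + Pi.single i 1) := by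
  set α' : Fin n → ℕ := α + Pi.single i 1 with hα'
  have hi : (i : ℕ) < n := i.isLt
  have hd := drop_finRange_cons hi
  have hii : (⟨(i:ℕ), hi⟩ : Fin n) = i := rfl
  rw [hii] at hd
  have h1 : xmon x α = (((List.finRange n).drop i.val).map (fun l => x l ^ α l)).prod :=
    xmon_eq_drop x α i.val (fun l hl => h l (by exact hl))
  have h2 : xmon x α'
      = (((List.finRange n).drop i.val).map (fun l => x l ^ α' l)).prod := by
    apply xmon_eq_drop
    intro l hl
    have hne : l ≠ i := by intro e; subst e; omega
    simp [hα', Pi.single_eq_of_ne hne, h l (by exact hl)]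
  have htail : ((List.finRange n).drop (i.val+1)).map (fun l => x l ^ α' l)
      = ((List.finRange n).drop (i.val+1)).map (fun l => x l ^ α l) := by
    apply List.map_congr_left
    intro l hl
    have hne : l ≠ i := by
      have := mem_drop_finRange hl; intro e; subst e; omega
    simp [hα', Pi.single_eq_of_ne hne]
  rw [h1, h2, hd]
  simp only [List.map_cons, List.prod_cons, htail]
  rw [← mul_assoc]
  congr 1
  have hval : α' i = α i + 1 := by simp [hα']
  rw [hval, pow_succ']

lemma xmon_flatMap {A : Type} [Ring A] {n : ℕ} (x : Fin n → A) (α : Fin n → ℕ) :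
    xmon x α = (((List.finRange n).flatMap (fun i => List.replicate (α i) i)).map x).prod := by
  unfold xmon
  induction (List.finRange n) with
  | nil => simp
  | cons hd tl ih => simp [List.flatMap_cons, ih, List.prod_replicate]

lemma sum_add_single {n : ℕ} (γ : Fin n → ℕ) (j : Fin n) :
    ∑ l : Fin n, (γ + Pi.single j 1 : Fin n → ℕ) l = (∑ l : Fin n, γ l) + 1 := by
  simp [Pi.add_apply, Finset.sum_add_distrib, Finset.sum_pi_single']

/-- `A` is a skew PBW extension of the subring `S ⊆ A` with respect to `x₁,…,xₙ`. -/
structure IsSkewPBWExt {A : Type} [Ring A] {n : ℕ} (S : Subring A) (x : Fin n → A) : Prop where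
  linearIndependent : LinearIndependent S (xmon x)
  spans : Submodule.span S (Set.range (xmon x)) = ⊤
  comm_coeff : ∀ (i : Fin n) (r : A), r ∈ S → r ≠ 0 →
    ∃ c ∈ S, c ≠ 0 ∧ x i * r - c * x i ∈ S
  comm_vars : ∀ i j : Fin n, ∃ c ∈ S, c ≠ 0 ∧
    x j * x i - c * (x i * x j) ∈ Submodule.span S (insert (1 : A) (Set.range x))

/-- If a ring `B` admits a ring homomorphism `φ : R → B` and elements `y₁,…,yₙ` such that `B`
is a free left `R`-module (action via `φ`) with basis the standard monomials in the `yᵢ`, and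
the `yᵢ` satisfy relations (i)–(ii) with respect to the parameters of the skew PBW extension
`A` of `R`, then `B ≅ A` via `r₁ x^{α₁} + ⋯ + r_t x^{α_t} ↦ φ(r₁) y^{α₁} + ⋯ + φ(r_t) y^{α_t}`. -/
theorem skewPBW_iso_of_free_basis {A : Type} [Ring A] {n : ℕ}
    (S : Subring A) (x : Fin n → A) (hA : IsSkewPBWExt S x)
    -- the parameters of A
    (σ : Fin n → S →+* S) (hσinj : ∀ i, Function.Injective (σ i))
    (δ : Fin n → S → S)
    (hδadd : ∀ (i : Fin n) (r s : S), δ i (r + s) = δ i r + δ i s)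
    (hδmul : ∀ (i : Fin n) (r s : S), δ i (r * s) = σ i r * δ i s + δ i r * s)
    (hσδ : ∀ (i : Fin n) (r : S), x i * (r : A) = (σ i r : A) * x i + (δ i r : A))
    (c d : Fin n → Fin n → S) (a : Fin n → Fin n → Fin n → S)
    (hcda : ∀ i j : Fin n, i < j →
      x j * x i = (c i j : A) * (x i * x j) + (∑ k, (a i j k : A) * x k) + (d i j : A))
    -- (i) a ring homomorphism φ : R → B, (ii) B free with basis the standard monomials in y
    {B : Type} [Ring B] (φ : S →+* B) (y : Fin n → B)
    (hfree : Function.Bijective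
      (fun f : (Fin n → ℕ) →₀ S => f.sum (fun α r => φ r * xmon y α)))
    -- (iii) the defining relations
    (hy1 : ∀ (i : Fin n) (r : S), y i * φ r = φ (σ i r) * y i + φ (δ i r))
    (hy2 : ∀ i j : Fin n, i < j →
      y j * y i = φ (c i j) * (y i * y j) + (∑ k, φ (a i j k) * y k) + φ (d i j)) :
    ∃ e : A ≃+* B, ∀ f : (Fin n → ℕ) →₀ S,
      e (f.sum (fun α r => (r : A) * xmon x α)) = f.sum (fun α r => φ r * xmon y α) := by
  classical
  have hsp : ⊤ ≤ Submodule.span S (Set.range (xmon x)) := hA.spans.ge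
  let bA : Module.Basis (Fin n → ℕ) S A := Module.Basis.mk hA.linearIndependent hsp
  have hbA : ∀ α, bA α = xmon x α := fun α => Module.Basis.mk_apply hA.linearIndependent hsp α
  let FB : ((Fin n → ℕ) →₀ S) →+ B :=
    AddMonoidHom.mk' (fun f => f.sum (fun α r => φ r * xmon y α)) (by
      intro f g
      exact Finsupp.sum_add_index' (fun α => by simp) (fun α r s => by rw [map_add, add_mul]))
  have hFB : ∀ f, FB f = f.sum (fun α r => φ r * xmon y α) := fun f => rfl
  let FBe : ((Fin n → ℕ) →₀ S) ≃+ B := AddEquiv.ofBijective FB hfree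
  have hFBe : ∀ f, FBe f = f.sum (fun α r => φ r * xmon y α) := fun f => rfl
  let E : A ≃+ B := bA.repr.toAddEquiv.trans FBe
  have hEdef : ∀ u : A, E u = FBe (bA.repr u) := fun _ => rfl
  have hrepr : ∀ f : (Fin n → ℕ) →₀ S,
      bA.repr.symm f = f.sum (fun α r => (r : A) * xmon x α) := by
    intro f
    rw [Module.Basis.repr_symm_apply, Finsupp.linearCombination_apply]
    refine Finsupp.sum_congr ?_
    intro α _
    rw [hbA]
    rfl
  have hE : ∀ f : (Fin n → ℕ) →₀ S,
      E (f.sum (fun α r => (r : A) * xmon x α)) = f.sum (fun α r => φ r * xmon y α) := by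
    intro f
    rw [← hrepr f, hEdef, LinearEquiv.apply_symm_apply]
    exact hFBe f
  have hE1 : ∀ (r : S) (α : Fin n → ℕ), E ((r : A) * xmon x α) = φ r * xmon y α := by
    intro r α
    have h0A : ((0 : S) : A) * xmon x α = 0 := by simp
    have h0B : φ (0 : S) * xmon y α = 0 := by simp
    have := hE (Finsupp.single α r)
    rwa [Finsupp.sum_single_index h0A, Finsupp.sum_single_index h0B] at this
  have hExmon : ∀ α, E (xmon x α) = xmon y α := by
    intro α
    have := hE1 1 α
    simpa using this
  have huSum : ∀ u : A, u = (bA.repr u).sum (fun α r => (r : A) * xmon x α) := by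
    intro u
    rw [← hrepr]
    exact (bA.repr.symm_apply_apply u).symm
  have hEu : ∀ u : A, E u = (bA.repr u).sum (fun α r => φ r * xmon y α) := by
    intro u
    conv_lhs => rw [huSum u]
    exact hE _
  -- E is "S-linear"
  have hEsmul : ∀ (s : S) (u : A), E ((s : A) * u) = φ s * E u := by
    intro s u
    conv_lhs => rw [huSum u]
    rw [Finsupp.mul_sum, map_finsuppSum]
    rw [hEu u, Finsupp.mul_sum]
    refine Finsupp.sum_congr ?_
    intro α _
    rw [← mul_assoc, ← Subring.coe_mul, hE1, map_mul, mul_assoc]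
  -- the filtration
  let Fil : ℕ → Submodule S A := fun m =>
    Submodule.span S {u | ∃ α : Fin n → ℕ, (∑ l, α l) ≤ m ∧ u = xmon x α}
  have Filmono : ∀ {m m' : ℕ}, m ≤ m' → Fil m ≤ Fil m' := by
    intro m m' hmm
    apply Submodule.span_mono
    rintro u ⟨α, hα, rfl⟩
    exact ⟨α, le_trans hα hmm, rfl⟩
  have hxmonFil : ∀ (α : Fin n → ℕ) (m : ℕ), (∑ l, α l) ≤ m → xmon x α ∈ Fil m := by
    intro α m hm
    exact Submodule.subset_span ⟨α, hm, rfl⟩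
  have hFiltop : ∀ u : A, ∃ m, u ∈ Fil m := by
    intro u
    have h : ∀ f : (Fin n → ℕ) →₀ S,
        f.sum (fun α r => (r : A) * xmon x α) ∈ Fil (f.support.sup (fun α => ∑ l, α l)) := by
      intro f
      refine Submodule.finsuppSum_mem _ _ _ _ ?_
      intro α hα
      have h1 : ((f α : A) * xmon x α : A) = (f α) • xmon x α := rfl
      rw [h1]
      exact Submodule.smul_mem _ _ (hxmonFil α _ (Finset.le_sup (Finsupp.mem_support_iff.2 hα)))
    have h2 := h (bA.repr u)
    rw [← huSum u] at h2
    exact ⟨_, h2⟩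
  -- the key lemma
  have key : ∀ (m iv : ℕ) (i : Fin n), i.val = iv → ∀ u ∈ Fil m,
      x i * u ∈ Fil (m+1) ∧ E (x i * u) = y i * E u := by
    intro m
    induction m using Nat.strong_induction_on with
    | _ m IHm =>
    intro iv
    induction iv using Nat.strong_induction_on with
    | _ iv IHi =>
    rintro i rfl u hu
    refine Submodule.span_induction ?_ ?_ ?_ ?_ hu
    · -- generators
      rintro u ⟨α, hα, rfl⟩
      by_cases hlow : ∀ l, l < i → α l = 0
      · constructor
        · rw [xmon_mul_left x α i hlow]
          exact hxmonFil _ _ (by rw [sum_add_single]; omega)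
        · rw [xmon_mul_left x α i hlow, hExmon, hExmon,
            ← xmon_mul_left y α i hlow]
      · push_neg at hlow
        obtain ⟨l₀, hl₀i, hl₀⟩ := hlow
        set s : Finset (Fin n) := Finset.univ.filter (fun l => α l ≠ 0) with hs
        have hsne : s.Nonempty := ⟨l₀, by simp [hs, hl₀]⟩
        set k : Fin n := s.min' hsne with hk
        have hkmem : α k ≠ 0 := by
          have := s.min'_mem hsne
          simpa [hs] using this
        have hkmin : ∀ l, α l ≠ 0 → k ≤ l := by
          intro l hl
          exact s.min'_le l (by simp [hs, hl])
        have hki : k < i := lt_of_le_of_lt (hkmin l₀ hl₀) hl₀i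
        have hαlow : ∀ l, l < k → α l = 0 := by
          intro l hl
          by_contra hne
          exact absurd (hkmin l hne) (by exact not_le.mpr hl)
        set β : Fin n → ℕ := Function.update α k (α k - 1) with hβdef
        have hβ : β + Pi.single k 1 = α := by
          funext l
          by_cases hlk : l = k
          · subst hlk
            simp [hβdef]
            omega
          · simp [hβdef, Function.update_of_ne hlk, Pi.single_eq_of_ne hlk]
        have hβlow : ∀ l, l < k → β l = 0 := by
          intro l hl
          rw [hβdef, Function.update_of_ne (by exact fun e => absurd e (by intro e'; subst e'; exact lt_irrefl _ hl)) ]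
          exact hαlow l hl
        have hdeg : (∑ l, α l) = (∑ l, β l) + 1 := by
          rw [← hβ, sum_add_single]
        have hβm : (∑ l, β l) ≤ m - 1 := by omega
        have hm1 : 1 ≤ m := by omega
        have hxα : xmon x α = x k * xmon x β := by
          rw [xmon_mul_left x β k hβlow, hβ]
        have hyα : xmon y α = y k * xmon y β := by
          rw [xmon_mul_left y β k hβlow, hβ]
        have hβFil : xmon x β ∈ Fil (m-1) := hxmonFil _ _ hβm
        -- IH at (m-1, i) on xmon x β
        obtain ⟨hI1, hI2⟩ := IHm (m-1) (by omega) i.val i rfl (xmon x β) hβFil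
        have hI1' : x i * xmon x β ∈ Fil m := by
          have : m - 1 + 1 = m := by omega
          rwa [this] at hI1
        -- IH at (m, k) on x i * xmon x β
        obtain ⟨hK1, hK2⟩ := IHi k.val hki k rfl (x i * xmon x β) hI1'
        -- IH at (m-1, l) on xmon x β
        have hL : ∀ l : Fin n, x l * xmon x β ∈ Fil m ∧
            E (x l * xmon x β) = y l * xmon y β := by
          intro l
          obtain ⟨h1, h2⟩ := IHm (m-1) (by omega) l.val l rfl (xmon x β) hβFil
          have : m - 1 + 1 = m := by omega
          rw [this] at h1
          rw [hExmon] at h2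
          exact ⟨h1, h2⟩
        -- rewrite the product
        have hrw : x i * xmon x α
            = (c k i : A) * (x k * (x i * xmon x β))
              + (∑ l, (a k i l : A) * (x l * xmon x β)) + (d k i : A) * xmon x β := by
          rw [hxα, ← mul_assoc, hcda k i hki]
          rw [add_mul, add_mul, Finset.sum_mul]
          congr 2
          · rw [mul_assoc, mul_assoc]
          · refine Finset.sum_congr rfl (fun l _ => by rw [mul_assoc])
        constructor
        · rw [hrw]
          refine Submodule.add_mem _ (Submodule.add_mem _ ?_ ?_) ?_
          · have : (c k i : A) * (x k * (x i * xmon x β)) = (c k i) • (x k * (x i * xmon x β)) := rfl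
            rw [this]
            exact Submodule.smul_mem _ _ hK1
          · apply Submodule.sum_mem
            intro l _
            have : (a k i l : A) * (x l * xmon x β) = (a k i l) • (x l * xmon x β) := rfl
            rw [this]
            exact Submodule.smul_mem _ _ (Filmono (by omega) (hL l).1)
          · have : (d k i : A) * xmon x β = (d k i) • xmon x β := rfl
            rw [this]
            exact Submodule.smul_mem _ _ (Filmono (by omega) hβFil)
        · rw [hrw]
          rw [map_add, map_add, hEsmul, hEsmul, map_sum]
          have hterm : ∀ l : Fin n, E ((a k i l : A) * (x l * xmon x β))
              = φ (a k i l) * (y l * xmon y β) := by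
            intro l
            rw [hEsmul, (hL l).2]
          rw [Finset.sum_congr rfl (fun l _ => hterm l)]
          rw [hK2, hI2, hExmon, hExmon, hyα]
          -- now pure computation in B using hy2
          have hyy : y i * y k = φ (c k i) * (y k * y i) + (∑ l, φ (a k i l) * y l) + φ (d k i) :=
            hy2 k i hki
          calc φ (c k i) * (y k * (y i * xmon y β)) + (∑ l, φ (a k i l) * (y l * xmon y β))
                + φ (d k i) * xmon y β
              = (φ (c k i) * (y k * y i) + (∑ l, φ (a k i l) * y l) + φ (d k i)) * xmon y β := by
                rw [add_mul, add_mul, Finset.sum_mul]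
                congr 2
                · rw [mul_assoc, mul_assoc]
                · exact Finset.sum_congr rfl (fun l _ => by rw [mul_assoc])
            _ = (y i * y k) * xmon y β := by rw [← hyy]
            _ = y i * (y k * xmon y β) := by rw [mul_assoc]
    · -- zero
      simp
    · -- add
      rintro u v hu hv ⟨hu1, hu2⟩ ⟨hv1, hv2⟩
      constructor
      · rw [mul_add]; exact Submodule.add_mem _ hu1 hv1
      · rw [mul_add, map_add, hu2, hv2, map_add, mul_add]
    · -- smul
      rintro s u hu ⟨h1, h2⟩
      have hsu : (s : S) • u = (s : A) * u := rfl
      have hxs : x i * ((s : A) * u) = ((σ i s : A)) * (x i * u) + ((δ i s : A)) * u := by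
        rw [← mul_assoc, hσδ i s, add_mul, mul_assoc]
      constructor
      · rw [hsu, hxs]
        refine Submodule.add_mem _ ?_ ?_
        · have : (σ i s : A) * (x i * u) = (σ i s) • (x i * u) := rfl
          rw [this]; exact Submodule.smul_mem _ _ h1
        · have : (δ i s : A) * u = (δ i s) • u := rfl
          rw [this]; exact Submodule.smul_mem _ _ (Filmono (by omega) hu)
      · rw [hsu, hxs, map_add, hEsmul, hEsmul, h2, hEsmul]
        rw [← mul_assoc, ← mul_assoc, ← add_mul, ← hy1 i s, mul_assoc]
  -- consequences
  have K : ∀ (i : Fin n) (u : A), E (x i * u) = y i * E u := by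
    intro i u
    obtain ⟨m, hm⟩ := hFiltop u
    exact (key m i.val i rfl u hm).2
  have W : ∀ (l : List (Fin n)) (v : A), E ((l.map x).prod * v) = (l.map y).prod * E v := by
    intro l
    induction l with
    | nil => intro v; simp
    | cons i t ih =>
        intro v
        simp only [List.map_cons, List.prod_cons]
        rw [mul_assoc, K, ih, mul_assoc]
  have Wx : ∀ (α : Fin n → ℕ) (v : A), E (xmon x α * v) = xmon y α * E v := by
    intro α v
    rw [xmon_flatMap x α, xmon_flatMap y α]
    exact W _ v
  have hmul : ∀ u v : A, E (u * v) = E u * E v := by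
    intro u v
    conv_lhs => rw [huSum u]
    rw [Finsupp.sum_mul, map_finsuppSum]
    rw [hEu u, Finsupp.sum_mul]
    refine Finsupp.sum_congr ?_
    intro α _
    rw [mul_assoc, hEsmul, Wx, mul_assoc]
  refine ⟨{ E.toEquiv with map_mul' := fun u v => hmul u v, map_add' := E.map_add' }, ?_⟩
  intro f
  exact hE f
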